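/- (Generalized Descartes' Rule of Signs.) Let c₁,…,c_m be real numbers, not all zero, and let a₁ < a₂ < … < a_m be real numbers. Then the number of roots in (0,∞) of the function x ↦ Σ_{i=1}^m c_i x^{a_i} is at most the number of sign alternations of the sequence (c₁,…,c_m). In particular, a univariate m-nomial with real exponents has at most m−1 positive roots. -/

import Mathlib

open Real Set

/-- The number of sign alternations of a finite sequence `c : Fin m → ℝ`: the number
of pairs `j < j'` with `c j * c j' < 0` and `c i = 0` for all `j < i < j'`. -/
noncomputable def signAlternations {m : ℕ} (c : Fin m → ℝ) : ℕ :=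
  {p : Fin m × Fin m |
    p.1 < p.2 ∧ c p.1 * c p.2 < 0 ∧ ∀ i, p.1 < i → i < p.2 → c i = 0}.ncard


def AltSet {m : ℕ} (c : Fin m → ℝ) : Set (Fin m × Fin m) :=
  {p | p.1 < p.2 ∧ c p.1 * c p.2 < 0 ∧ ∀ i, p.1 < i → i < p.2 → c i = 0}

lemma signAlternations_eq {m : ℕ} (c : Fin m → ℝ) : signAlternations c = (AltSet c).ncard := rfl

lemma sign_iff {A B : ℝ} (h : 0 < A * B) : A < 0 ↔ B < 0 := by
  constructor <;> intro h' <;> nlinarith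

lemma exists_alt {m : ℕ} (c : Fin m → ℝ) :
    ∀ d : ℕ, ∀ j j' : Fin m, j'.val - j.val ≤ d → j < j' → c j * c j' < 0 →
      (AltSet c).Nonempty := by
  intro d
  induction d with
  | zero =>
    intro j j' hd hlt _
    rw [Fin.lt_def] at hlt; omega
  | succ d ih =>
    intro j j' hd hlt hneg
    by_cases hall : ∀ i, j < i → i < j' → c i = 0
    · exact ⟨(j, j'), hlt, hneg, hall⟩
    · push_neg at hall
      obtain ⟨i, h1, h2, hi⟩ := hall
      rw [Fin.lt_def] at hlt h1 h2
      have hcase : c j * c i < 0 ∨ c i * c j' < 0 := by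
        by_contra hcon
        push_neg at hcon
        have hi2 : 0 < c i ^ 2 := by positivity
        nlinarith [mul_nonneg hcon.1 hcon.2, mul_pos hi2 (neg_pos.mpr hneg)]
      rcases hcase with hc1 | hc1
      · exact ih j i (by omega) (by rw [Fin.lt_def]; omega) hc1
      · exact ih i j' (by omega) (by rw [Fin.lt_def]; omega) hc1

lemma altSet_flip {m : ℕ} (c c' : Fin m → ℝ) (k k' : Fin m) (hp : (k, k') ∈ AltSet c)
    (hzero : ∀ i, c' i = 0 ↔ c i = 0)
    (hneg : ∀ i, i ≤ k → c i ≠ 0 → c' i * c i < 0)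
    (hpos : ∀ i, k' ≤ i → c i ≠ 0 → 0 < c' i * c i) :
    AltSet c' = AltSet c \ {(k, k')} := by
  obtain ⟨hkk, hknz, hkz⟩ := hp
  have hck : c k ≠ 0 := fun h => by rw [h, zero_mul] at hknz; exact lt_irrefl 0 hknz
  have hck' : c k' ≠ 0 := fun h => by rw [h, mul_zero] at hknz; exact lt_irrefl 0 hknz
  have hposn : ∀ i : Fin m, c i ≠ 0 → i ≤ k ∨ k' ≤ i := by
    intro i hi
    by_contra hcon
    push_neg at hcon
    exact hi (hkz i hcon.1 hcon.2)
  ext ⟨j, j'⟩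
  simp only [AltSet, Set.mem_setOf_eq, Set.mem_diff, Set.mem_singleton_iff, Prod.mk.injEq]
  constructor
  · rintro ⟨h1, h2, h3⟩
    have hcj' : c' j ≠ 0 := fun h => by rw [h, zero_mul] at h2; exact lt_irrefl 0 h2
    have hcj'2 : c' j' ≠ 0 := fun h => by rw [h, mul_zero] at h2; exact lt_irrefl 0 h2
    have hcj : c j ≠ 0 := fun h => hcj' ((hzero j).mpr h)
    have hcj2 : c j' ≠ 0 := fun h => hcj'2 ((hzero j').mpr h)
    have h3' : ∀ i, j < i → i < j' → c i = 0 := fun i hi hi' => (hzero i).mp (h3 i hi hi')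
    rcases hposn j' hcj2 with hj'k | hj'k
    · -- both ≤ k
      have hjk : j ≤ k := le_trans (le_of_lt h1) hj'k
      have hsame : 0 < (c' j * c' j') * (c j * c j') := by
        have := hneg j hjk hcj
        have := hneg j' hj'k hcj2
        nlinarith
      refine ⟨⟨h1, (sign_iff hsame).mp h2, h3'⟩, ?_⟩
      rintro ⟨rfl, rfl⟩
      exact absurd hj'k (not_le.mpr hkk)
    · rcases hposn j hcj with hjk | hjk
      · -- crossing: j = k, j' = k', contradiction with sign
        have hjek : j = k := by
          by_contra hne
          have hlt : j < k := lt_of_le_of_ne hjk hne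
          exact hck (h3' k hlt (lt_of_lt_of_le hkk hj'k))
        have hjek' : j' = k' := by
          by_contra hne
          have hlt : k' < j' := lt_of_le_of_ne hj'k (Ne.symm hne)
          exact hck' (h3' k' (hjek ▸ hkk) hlt)
        subst hjek; subst hjek'
        have hopp : (c' j * c' j') * (c j * c j') < 0 := by
          have := hneg j le_rfl hcj
          have := hpos j' le_rfl hcj2
          nlinarith
        nlinarith
      · -- both ≥ k'
        have hsame : 0 < (c' j * c' j') * (c j * c j') := by
          have := hpos j hjk hcj
          have := hpos j' (le_trans hjk (le_of_lt h1)) hcj2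
          nlinarith
        refine ⟨⟨h1, (sign_iff hsame).mp h2, h3'⟩, ?_⟩
        rintro ⟨rfl, rfl⟩
        exact absurd hjk (not_le.mpr hkk)
  · rintro ⟨⟨h1, h2, h3⟩, hne⟩
    have hcj : c j ≠ 0 := fun h => by rw [h, zero_mul] at h2; exact lt_irrefl 0 h2
    have hcj2 : c j' ≠ 0 := fun h => by rw [h, mul_zero] at h2; exact lt_irrefl 0 h2
    have h3' : ∀ i, j < i → i < j' → c' i = 0 := fun i hi hi' => (hzero i).mpr (h3 i hi hi')
    rcases hposn j' hcj2 with hj'k | hj'k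
    · have hjk : j ≤ k := le_trans (le_of_lt h1) hj'k
      have hsame : 0 < (c' j * c' j') * (c j * c j') := by
        have := hneg j hjk hcj
        have := hneg j' hj'k hcj2
        nlinarith
      exact ⟨h1, (sign_iff hsame).mpr h2, h3'⟩
    · rcases hposn j hcj with hjk | hjk
      · exfalso
        have hjek : j = k := by
          by_contra hne'
          have hlt : j < k := lt_of_le_of_ne hjk hne'
          exact hck (h3 k hlt (lt_of_lt_of_le hkk hj'k))
        have hjek' : j' = k' := by
          by_contra hne'
          have hlt : k' < j' := lt_of_le_of_ne hj'k (Ne.symm hne')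
          exact hck' (h3 k' (hjek ▸ hkk) hlt)
        exact hne ⟨hjek, hjek'⟩
      · have hsame : 0 < (c' j * c' j') * (c j * c j') := by
          have := hpos j hjk hcj
          have := hpos j' (le_trans hjk (le_of_lt h1)) hcj2
          nlinarith
        exact ⟨h1, (sign_iff hsame).mpr h2, h3'⟩


lemma rolle_count (h g : ℝ → ℝ) (hd : ∀ x : ℝ, 0 < x → HasDerivAt h (g x) x) (n : ℕ)
    (hg : {x : ℝ | 0 < x ∧ g x = 0}.encard ≤ n) :
    {x : ℝ | 0 < x ∧ h x = 0}.encard ≤ (n + 1 : ℕ) := by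
  by_contra hlt
  push_neg at hlt
  have h2 : ((n + 2 : ℕ) : ℕ∞) ≤ {x : ℝ | 0 < x ∧ h x = 0}.encard := by
    have := Order.add_one_le_of_lt hlt
    have e2 : ((n + 2 : ℕ) : ℕ∞) = ((n+1 : ℕ) : ℕ∞) + 1 := by push_cast; ring
    rw [e2]; exact this
  obtain ⟨t, hts, htc⟩ := Set.exists_subset_encard_eq h2
  have htf : t.Finite := Set.finite_of_encard_eq_coe htc
  have hcard : htf.toFinset.card = n + 2 := by
    have := htf.encard_eq_coe_toFinset_card
    rw [htc] at this
    exact_mod_cast this.symm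
  set e := htf.toFinset.orderEmbOfFin hcard with he
  have hmem : ∀ i, e i ∈ {x : ℝ | 0 < x ∧ h x = 0} := fun i =>
    hts (htf.mem_toFinset.mp (Finset.orderEmbOfFin_mem _ hcard i))
  -- Rolle points
  have key : ∀ i : Fin (n + 1), ∃ z, e (i.castSucc) < z ∧ z < e i.succ ∧ g z = 0 := by
    intro i
    have hlt' : e i.castSucc < e i.succ := e.strictMono (Fin.castSucc_lt_succ : i.castSucc < i.succ)
    have hpos : (0 : ℝ) < e i.castSucc := (hmem _).1
    have hcont : ContinuousOn h (Icc (e i.castSucc) (e i.succ)) := fun x hx =>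
      ((hd x (lt_of_lt_of_le hpos hx.1)).continuousAt).continuousWithinAt
    have heq : h (e i.castSucc) = h (e i.succ) := by
      rw [(hmem i.castSucc).2, (hmem i.succ).2]
    obtain ⟨z, hz, hz0⟩ := exists_hasDerivAt_eq_zero hlt' hcont heq
      (fun x hx => hd x (lt_trans hpos hx.1))
    exact ⟨z, hz.1, hz.2, hz0⟩
  choose z hz1 hz2 hz0 using key
  have hzmono : StrictMono z := by
    intro i j hij
    calc z i < e i.succ := hz2 i
    _ ≤ e j.castSucc := e.monotone (by
        rw [Fin.le_def]; rw [Fin.lt_def] at hij; simp; omega)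
    _ < z j := hz1 j
  have hsub : ↑(Finset.univ.image z) ⊆ {x : ℝ | 0 < x ∧ g x = 0} := by
    intro x hx
    simp only [Finset.coe_image, Finset.coe_univ, Set.image_univ, Set.mem_range] at hx
    obtain ⟨i, rfl⟩ := hx
    exact ⟨lt_trans (hmem i.castSucc).1 (hz1 i), hz0 i⟩
  have hcard2 : (Finset.univ.image z).card = n + 1 := by
    rw [Finset.card_image_of_injective _ hzmono.injective, Finset.card_univ, Fintype.card_fin]
  have : ((n + 1 : ℕ) : ℕ∞) ≤ (n : ℕ∞) := by
    calc ((n + 1 : ℕ) : ℕ∞) = (Finset.univ.image z).card := by rw [hcard2]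
    _ = (↑(Finset.univ.image z) : Set ℝ).encard := (Set.encard_coe_eq_coe_finsetCard _).symm
    _ ≤ {x : ℝ | 0 < x ∧ g x = 0}.encard := Set.encard_mono hsub
    _ ≤ n := hg
  exact absurd (by exact_mod_cast this) (by omega)

lemma roots_empty_of_no_alt {m : ℕ} (c : Fin m → ℝ) (a : Fin m → ℝ)
    (hc : ∃ i, c i ≠ 0) (hA : AltSet c = ∅) :
    {x : ℝ | 0 < x ∧ ∑ i, c i * x ^ a i = 0} = ∅ := by
  obtain ⟨i₀, hi₀⟩ := hc
  have hsign : ∀ i, 0 ≤ c i₀ * c i := by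
    intro i
    by_contra h'
    push_neg at h'
    rcases lt_trichotomy i₀ i with hlt | heq | hlt
    · obtain ⟨p, hp⟩ := exists_alt c m i₀ i (by omega) hlt h'
      rw [hA] at hp; exact hp
    · rw [← heq] at h'; nlinarith [sq_nonneg (c i₀)]
    · obtain ⟨p, hp⟩ := exists_alt c m i i₀ (by omega) hlt (by nlinarith)
      rw [hA] at hp; exact hp
  ext x
  simp only [Set.mem_setOf_eq, Set.mem_empty_iff_false, iff_false, not_and]
  intro hx hsum
  have hpos : 0 < c i₀ * ∑ i, c i * x ^ a i := by
    rw [Finset.mul_sum]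
    apply Finset.sum_pos'
    · intro i _
      have := Real.rpow_pos_of_pos hx (a i)
      nlinarith [hsign i]
    · refine ⟨i₀, Finset.mem_univ _, ?_⟩
      have := Real.rpow_pos_of_pos hx (a i₀)
      nlinarith [mul_self_pos.mpr hi₀]
  rw [hsum, mul_zero] at hpos
  exact lt_irrefl 0 hpos

lemma key : ∀ (n : ℕ) (m : ℕ) (c a : Fin m → ℝ), StrictMono a → (∃ i, c i ≠ 0) →
    signAlternations c ≤ n →
    {x : ℝ | 0 < x ∧ ∑ i, c i * x ^ a i = 0}.encard ≤ (signAlternations c : ℕ∞) := by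
  intro n
  induction n with
  | zero =>
    intro m c a ha hc hV
    have hA : AltSet c = ∅ := by
      rw [← Set.ncard_eq_zero (Set.toFinite _), ← signAlternations_eq]
      omega
    rw [roots_empty_of_no_alt c a hc hA, Set.encard_empty]
    exact zero_le
  | succ n ih =>
    intro m c a ha hc hV
    by_cases hV0 : signAlternations c = 0
    · have hA : AltSet c = ∅ := by
        rw [← Set.ncard_eq_zero (Set.toFinite _)]; exact hV0
      rw [roots_empty_of_no_alt c a hc hA, Set.encard_empty]
      exact zero_le
    · have hAne : (AltSet c).Nonempty := by
        rw [Set.nonempty_iff_ne_empty]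
        intro h
        exact hV0 (by rw [signAlternations_eq, h, Set.ncard_empty])
      obtain ⟨⟨k, k'⟩, hp⟩ := hAne
      have hkk : k < k' := hp.1
      have hck : c k ≠ 0 := fun h => by
        have := hp.2.1; rw [h, zero_mul] at this; exact lt_irrefl 0 this
      have hak : a k < a k' := ha hkk
      set b : ℝ := (a k + a k') / 2 with hb
      have hb1 : a k < b := by rw [hb]; linarith
      have hb2 : b < a k' := by rw [hb]; linarith
      set c' : Fin m → ℝ := fun i => c i * (a i - b) with hc'def
      set a' : Fin m → ℝ := fun i => a i - b - 1 with ha'def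
      have ha' : StrictMono a' := fun i j hij => by
        simp only [ha'def]
        have := ha hij; linarith
      have hzero : ∀ i, c' i = 0 ↔ c i = 0 := by
        intro i
        constructor
        · intro h
          rcases mul_eq_zero.mp h with h | h
          · exact h
          · have hai : a i = b := by linarith [sub_eq_zero.mp h]
            have h1 : k < i := ha.lt_iff_lt.mp (by rw [hai]; exact hb1)
            have h2 : i < k' := ha.lt_iff_lt.mp (by rw [hai]; exact hb2)
            exact hp.2.2 i h1 h2
        · intro h; simp [hc'def, h]
      have hneg : ∀ i, i ≤ k → c i ≠ 0 → c' i * c i < 0 := by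
        intro i hik hci
        have h1 : a i ≤ a k := ha.monotone hik
        have h2 : 0 < c i ^ 2 := by positivity
        simp only [hc'def]
        nlinarith
      have hpos : ∀ i, k' ≤ i → c i ≠ 0 → 0 < c' i * c i := by
        intro i hik hci
        have h1 : a k' ≤ a i := ha.monotone hik
        have h2 : 0 < c i ^ 2 := by positivity
        simp only [hc'def]
        nlinarith
      have hflip := altSet_flip c c' k k' hp hzero hneg hpos
      have hVc' : signAlternations c' = signAlternations c - 1 := by
        rw [signAlternations_eq, hflip,
          Set.ncard_diff_singleton_of_mem hp, ← signAlternations_eq]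
      have hc'ne : ∃ i, c' i ≠ 0 := ⟨k, fun h => hck ((hzero k).mp h)⟩
      have hVle : signAlternations c' ≤ n := by omega
      have henc' := ih m c' a' ha' hc'ne hVle
      set h : ℝ → ℝ := fun x => ∑ i, c i * x ^ (a i - b) with hhdef
      set g : ℝ → ℝ := fun x => ∑ i, c' i * x ^ a' i with hgdef
      have hd : ∀ x : ℝ, 0 < x → HasDerivAt h (g x) x := by
        intro x hx
        have hterm : ∀ i : Fin m,
            HasDerivAt (fun y : ℝ => c i * y ^ (a i - b)) (c' i * x ^ a' i) x := by
          intro i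
          have := (Real.hasDerivAt_rpow_const (x := x) (p := a i - b)
            (Or.inl hx.ne')).const_mul (c i)
          refine this.congr_deriv ?_
          simp only [hc'def, ha'def]
          ring
        simpa [hhdef, hgdef] using HasDerivAt.fun_sum (fun i _ => hterm i)
      have hgle : {x : ℝ | 0 < x ∧ g x = 0}.encard ≤ (signAlternations c - 1 : ℕ) := by
        rw [← hVc']
        exact_mod_cast henc'
      have hroots := rolle_count h g hd (signAlternations c - 1) hgle
      have hstep : signAlternations c - 1 + 1 = signAlternations c := by omega
      rw [hstep] at hroots
      have hseteq : {x : ℝ | 0 < x ∧ ∑ i, c i * x ^ a i = 0} = {x : ℝ | 0 < x ∧ h x = 0} := by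
        ext x
        simp only [Set.mem_setOf_eq, hhdef]
        refine and_congr_right fun hx => ?_
        have hfac : ∀ i : Fin m, c i * x ^ a i = x ^ b * (c i * x ^ (a i - b)) := by
          intro i
          rw [show a i = b + (a i - b) by ring, Real.rpow_add hx]
          ring_nf
        have hbpos : (0 : ℝ) < x ^ b := Real.rpow_pos_of_pos hx b
        have hkey : ∑ i, c i * x ^ a i = x ^ b * ∑ i, c i * x ^ (a i - b) := by
          rw [Finset.mul_sum]
          exact Finset.sum_congr rfl (fun i _ => hfac i)
        rw [hkey, mul_eq_zero]
        simp [hbpos.ne']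
      rw [hseteq]
      exact hroots


lemma signAlternations_le_of_nonzero {m : ℕ} (c : Fin m → ℝ) (hall : ∀ i, c i ≠ 0) :
    signAlternations c ≤ m - 1 := by
  rw [signAlternations_eq]
  have hinj : Set.InjOn (fun p : Fin m × Fin m => p.1.val) (AltSet c) := by
    rintro ⟨j, j'⟩ hp ⟨l, l'⟩ hq hpq
    simp only at hpq
    have h1 : j = l := Fin.ext hpq
    have hsucc : ∀ p : Fin m × Fin m, p ∈ AltSet c → p.2.val = p.1.val + 1 := by
      rintro ⟨u, u'⟩ ⟨h1', _, h3'⟩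
      have h1'' : u.val < u'.val := Fin.lt_def.mp h1'
      clear h1'
      show u'.val = u.val + 1
      by_contra hne
      have hlt : u.val + 1 < u'.val := by omega
      have hmem : u.val + 1 < m := by omega
      exact hall ⟨u.val + 1, hmem⟩
        (h3' ⟨u.val + 1, hmem⟩ (by rw [Fin.lt_def]; simp) (by rw [Fin.lt_def]; simpa))
    have h2 : j' = l' := Fin.ext (by rw [hsucc _ hp, hsucc _ hq]; simp [hpq])
    rw [Prod.ext_iff]
    exact ⟨h1, h2⟩
  rw [← Set.ncard_image_of_injOn hinj]
  have hsub : (fun p : Fin m × Fin m => p.1.val) '' AltSet c ⊆ ↑(Finset.range (m - 1)) := by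
    rintro x ⟨⟨j, j'⟩, hp, rfl⟩
    simp only [Finset.coe_range, Set.mem_Iio]
    have h1 : j.val < j'.val := Fin.lt_def.mp hp.1
    have h2 : j'.val < m := j'.isLt
    omega
  calc ((fun p : Fin m × Fin m => p.1.val) '' AltSet c).ncard
      ≤ (↑(Finset.range (m - 1)) : Set ℕ).ncard :=
        Set.ncard_le_ncard hsub (Finset.finite_toSet _)
    _ = m - 1 := by rw [Set.ncard_coe_finset, Finset.card_range]

/-- Generalized Descartes' rule of signs -/
theorem generalized_descartes_rule_of_signs
    (m : ℕ) (c : Fin m → ℝ) (hc : ∃ i, c i ≠ 0) (a : Fin m → ℝ) (ha : StrictMono a) :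
    {x : ℝ | 0 < x ∧ ∑ i, c i * x ^ a i = 0}.encard ≤ (signAlternations c : ℕ∞) ∧
    ((∀ i, c i ≠ 0) →
      {x : ℝ | 0 < x ∧ ∑ i, c i * x ^ a i = 0}.encard ≤ ((m - 1 : ℕ) : ℕ∞)) := by
  have hmain := key (signAlternations c) m c a ha hc le_rfl
  refine ⟨hmain, fun hall => hmain.trans ?_⟩
  exact_mod_cast signAlternations_le_of_nonzero c hall
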